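/- Let M be the circle of circumference 2πr with its intrinsic metric, let N ⊆ M be a subset with the restricted metric, and let g : N → N be a surjective distance-preserving map. Then g extends to a distance-preserving bijection ḡ : M → M with ḡ|_N = g. -/
import Mathlib

lemma addCircle_norm_eq_iff (p : ℝ) (u v : AddCircle p) (h : ‖u‖ = ‖v‖) :
    u = v ∨ u = -v := by
  induction u using QuotientAddGroup.induction_on with
  | H a =>
  induction v using QuotientAddGroup.induction_on with
  | H b =>
  rw [AddCircle.norm_eq, AddCircle.norm_eq] at h
  have hz : ∀ x : ℝ, (((round (p⁻¹ * x) : ℝ) * p : ℝ) : AddCircle p) = 0 := by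
    intro x
    rw [AddCircle.coe_eq_zero_iff]
    exact ⟨round (p⁻¹ * x), by simp [zsmul_eq_mul]⟩
  have hca : ((a : ℝ) : AddCircle p) = ((a - round (p⁻¹ * a) * p : ℝ) : AddCircle p) := by
    rw [AddCircle.coe_sub, hz a, sub_zero]
  have hcb : ((b : ℝ) : AddCircle p) = ((b - round (p⁻¹ * b) * p : ℝ) : AddCircle p) := by
    rw [AddCircle.coe_sub, hz b, sub_zero]
  rcases abs_eq_abs.mp h with hab | hab
  · left; rw [hca, hcb, hab]
  · right; rw [hca, hcb, hab, AddCircle.coe_neg]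

lemma addCircle_extend_aux (p : ℝ) (N : Set (AddCircle p)) (g : N → N)
    (hgi : ∀ a b : N, dist (g a : AddCircle p) (g b)
      = dist (a : AddCircle p) b) :
    ∃ gbar : AddCircle p → AddCircle p,
      Isometry gbar ∧ Function.Bijective gbar ∧ ∀ x : N, gbar x = g x := by
  by_cases hN : N.Nonempty
  · obtain ⟨q, hq⟩ := hN
    set p0 : N := ⟨q, hq⟩ with hp0
    have key : ∀ x : N, ((g x : AddCircle p) - g p0 = (x : AddCircle p) - p0) ∨
        ((g x : AddCircle p) - g p0 = -((x : AddCircle p) - p0)) := by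
      intro x
      have hd : ‖(g x : AddCircle p) - g p0‖ = ‖(x : AddCircle p) - (p0 : AddCircle p)‖ := by
        have := hgi x p0
        rwa [dist_eq_norm, dist_eq_norm] at this
      exact addCircle_norm_eq_iff _ _ _ hd
    by_cases hA : ∀ x : N, (g x : AddCircle p) - g p0 = (x : AddCircle p) - p0
    · refine ⟨fun z => ((g p0 : AddCircle p) - p0) + z, ?_, ?_, ?_⟩
      · intro x y
        show edist (_ + x) (_ + y) = edist x y
        rw [edist_dist, edist_dist, dist_eq_norm, dist_eq_norm]
        congr 2
        abel
      · exact (Equiv.addLeft ((g p0 : AddCircle p) - (p0 : AddCircle p))).bijective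
      · intro x
        have h := eq_add_of_sub_eq (hA x)
        show (g p0 : AddCircle p) - p0 + x = g x
        rw [h]; abel
    · push_neg at hA
      obtain ⟨x0, hx0⟩ := hA
      have hx0' : (g x0 : AddCircle p) - g p0 = -((x0 : AddCircle p) - p0) :=
        (key x0).resolve_left hx0
      have hAll : ∀ x : N, (g x : AddCircle p) - g p0 = -((x : AddCircle p) - p0) := by
        intro x
        rcases key x with hx | hx
        · set a : AddCircle p := (x0 : AddCircle p) - p0 with ha
          set b : AddCircle p := (x : AddCircle p) - p0 with hb
          have hna : ¬ (a = -a) := fun hcon => hx0 (by rw [hx0', ← hcon])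
          have hd : ‖(g x0 : AddCircle p) - g x‖ = ‖(x0 : AddCircle p) - (x : AddCircle p)‖ := by
            have := hgi x0 x
            rwa [dist_eq_norm, dist_eq_norm] at this
          have h1 : (g x0 : AddCircle p) - g x = -a - b := by
            have h0 : (g x0 : AddCircle p) - g x
                = ((g x0 : AddCircle p) - g p0) - ((g x : AddCircle p) - g p0) := by abel
            rw [h0, hx0', hx]
          have h2 : (x0 : AddCircle p) - (x : AddCircle p) = a - b := by rw [ha, hb]; abel
          rw [h1, h2] at hd
          rcases addCircle_norm_eq_iff _ _ _ hd with hc | hc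
          · exfalso
            apply hna
            have h4 : (-a - b) + b = (a - b) + b := by rw [hc]
            have h5 : -a = a := by
              calc -a = (-a - b) + b := by abel
                _ = (a - b) + b := h4
                _ = a := by abel
            exact h5.symm
          · have h3 : -a + -b = b + -a := by
              calc -a + -b = -a - b := by abel
                _ = -(a - b) := hc
                _ = b + -a := by abel
            have hbb : b = -b := by
              have h4 : a + (-a + -b) = a + (b + -a) := by rw [h3]
              have h5 : -b = b := by
                calc -b = a + (-a + -b) := by abel
                  _ = a + (b + -a) := h4
                  _ = b := by abel
              exact h5.symm
            rw [hx, hb]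
            rw [hb] at hbb
            exact hbb
        · exact hx
      refine ⟨fun z => ((g p0 : AddCircle p) + p0) - z, ?_, ?_, ?_⟩
      · intro x y
        show edist (_ - x) (_ - y) = edist x y
        rw [edist_dist, edist_dist, dist_eq_norm, dist_eq_norm]
        have h0 : ((g p0 : AddCircle p) + p0) - x - (((g p0 : AddCircle p) + p0) - y)
            = y - x := by abel
        rw [h0, norm_sub_rev]
      · constructor
        · intro x y hxy
          have h0 : (g p0 : AddCircle p) + p0 - ((g p0 : AddCircle p) + p0 - x)
              = (g p0 : AddCircle p) + p0 - ((g p0 : AddCircle p) + p0 - y) := by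
            simp only at hxy
            rw [hxy]
          simpa using h0
        · intro y
          refine ⟨(g p0 : AddCircle p) + p0 - y, ?_⟩
          show (g p0 : AddCircle p) + p0 - ((g p0 : AddCircle p) + p0 - y) = y
          abel
      · intro x
        have h := hAll x
        have h' : (g x : AddCircle p) = (g p0 : AddCircle p) + p0 - x := by
          have h'' := eq_add_of_sub_eq h
          rw [h'']; abel
        show (g p0 : AddCircle p) + p0 - x = g x
        rw [h']
  · refine ⟨id, isometry_id, Function.bijective_id, fun x => ?_⟩
    exact absurd ⟨x, x.2⟩ hN

theorem circle_subset_isometry_extends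
    (r : ℝ) (hr : 0 < r)
    (N : Set (AddCircle (2 * Real.pi * r)))
    (g : N → N)
    (hgs : Function.Surjective g)
    (hgi : ∀ a b : N, dist (g a : AddCircle (2 * Real.pi * r)) (g b)
      = dist (a : AddCircle (2 * Real.pi * r)) b) :
    ∃ gbar : AddCircle (2 * Real.pi * r) → AddCircle (2 * Real.pi * r),
      Isometry gbar ∧ Function.Bijective gbar ∧ ∀ x : N, gbar x = g x :=
  addCircle_extend_aux _ N g hgi
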